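/- Let n, m ∈ ℕ, let A, B be characters of the symmetric group S_n and Z a character of S_m. Then the induced characters (A × Z)↑^{S_{n+m}} and (B × Z)↑^{S_{n+m}} from S_n × S_m to S_{n+m} are equal if and only if A = B. -/

import Mathlib

open scoped Classical
open Equiv

noncomputable section

/-- The isomorphism `Perm α ≃* Perm β` induced by `e : α ≃ β`, as a monoid hom. -/
def permCongrHom {α β : Type*} (e : α ≃ β) : Perm α →* Perm β where
  toFun σ := e.permCongr σ
  map_one' := by ext x; simp
  map_mul' := by intro σ τ; ext x; simp [Equiv.permCongr_apply, Equiv.Perm.mul_apply]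

/-- Induction of a function along an (injective) homomorphism `f : H →* G`. -/
def indVia {H G : Type*} [Group H] [Fintype H] [Group G] [Fintype G]
    (f : H →* G) (φ : H → ℂ) (g : G) : ℂ :=
  (Nat.card H : ℂ)⁻¹ * ∑ x : G, ∑ h : H, if f h = x⁻¹ * g * x then φ h else 0

/-- The Young subgroup embedding `S_n × S_m → S_{n+m}`. -/
def youngEmb (n m : ℕ) : Perm (Fin n) × Perm (Fin m) →* Perm (Fin (n + m)) :=
  (_root_.permCongrHom finSumFinEquiv).comp (Equiv.Perm.sumCongrHom (Fin n) (Fin m))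

/-- Number of fixed points of a permutation. -/
def fixc {α : Type*} [Fintype α] (σ : Perm α) : ℕ :=
  ∑ x : α, if σ x = x then 1 else 0

lemma fixc_le {α : Type*} [Fintype α] (σ : Perm α) : fixc σ ≤ Fintype.card α := by
  classical
  unfold fixc
  calc ∑ x : α, (if σ x = x then 1 else 0) ≤ ∑ _x : α, 1 := by
        apply Finset.sum_le_sum; intro i _; split <;> omega
    _ = Fintype.card α := by simp

lemma fixc_one {α : Type*} [Fintype α] : fixc (1 : Perm α) = Fintype.card α := by
  simp [fixc]

lemma eq_one_of_fixc {α : Type*} [Fintype α] (σ : Perm α)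
    (h : fixc σ = Fintype.card α) : σ = 1 := by
  classical
  by_contra hne
  obtain ⟨b, hb⟩ : ∃ b, σ b ≠ b := by
    by_contra hc; push_neg at hc; exact hne (Equiv.ext hc)
  have : fixc σ < Fintype.card α := by
    unfold fixc
    have := Finset.sum_lt_sum (s := (Finset.univ : Finset α))
      (f := fun x => if σ x = x then 1 else 0) (g := fun _ => 1)
      (by intro i _; by_cases h : σ i = i <;> simp [h]) ⟨b, Finset.mem_univ b, by simp [hb]⟩
    simpa using this
  omega

lemma fixc_conj {α : Type*} [Fintype α] (z g : Perm α) : fixc (z * g * z⁻¹) = fixc g := by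
  unfold fixc
  refine (Fintype.sum_equiv z (fun a => if g a = a then 1 else 0) _ ?_).symm
  intro a
  simp [Equiv.Perm.mul_apply]

lemma fixc_permCongr {α β : Type*} [Fintype α] [Fintype β] (e : α ≃ β) (π : Perm α) :
    fixc (e.permCongr π) = fixc π := by
  unfold fixc
  refine (Fintype.sum_equiv e (fun a => if π a = a then 1 else 0)
    (fun b => if e.permCongr π b = b then 1 else 0) ?_).symm
  intro a
  simp [Equiv.permCongr_apply]

lemma fixc_sumCongr {α β : Type*} [Fintype α] [Fintype β] (σ : Perm α) (τ : Perm β) :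
    fixc (Equiv.sumCongr σ τ) = fixc σ + fixc τ := by
  unfold fixc
  rw [Fintype.sum_sum_type]
  simp

lemma fixc_young {n m : ℕ} (p : Perm (Fin n) × Perm (Fin m)) :
    fixc (youngEmb n m p) = fixc p.1 + fixc p.2 := by
  show fixc (Equiv.permCongr finSumFinEquiv (Equiv.sumCongr p.1 p.2)) = _
  rw [fixc_permCongr, fixc_sumCongr]

/-- The first block `Fin n` inside `Fin (n+m)`. -/
def blockEquiv (n m : ℕ) : Fin n ≃ {x : Fin (n + m) // (x : ℕ) < n} where
  toFun i := ⟨Fin.castAdd m i, i.isLt⟩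
  invFun x := ⟨x.1, x.2⟩
  left_inv i := rfl
  right_inv x := rfl

lemma young_one_eq_extend {n m : ℕ} (σ : Perm (Fin n)) :
    youngEmb n m (σ, 1) = σ.extendDomain (blockEquiv n m) := by
  apply Equiv.ext
  intro x
  rcases hy : finSumFinEquiv.symm x with a | b
  · have hx : x = finSumFinEquiv (Sum.inl a) := by
      rw [← hy]; simp
    subst hx
    have hL : youngEmb n m (σ, 1) (finSumFinEquiv (Sum.inl a)) = finSumFinEquiv (Sum.inl (σ a)) := by
      show Equiv.permCongr finSumFinEquiv (Equiv.sumCongr σ 1) _ = _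
      simp [Equiv.permCongr_apply]
    have hR : ∀ i : Fin n, ((blockEquiv n m i : {x : Fin (n + m) // (x : ℕ) < n}) : Fin (n + m))
        = finSumFinEquiv (Sum.inl i) := by
      intro i; simp [blockEquiv]
    rw [hL, ← hR, ← hR, Equiv.Perm.extendDomain_apply_image]
  · have hx : x = finSumFinEquiv (Sum.inr b) := by
      rw [← hy]; simp
    subst hx
    have hnot : ¬ ((finSumFinEquiv (Sum.inr b) : Fin (n + m)) : ℕ) < n := by
      simp [Fin.natAdd]
    rw [Equiv.Perm.extendDomain_apply_not_subtype σ (blockEquiv n m) hnot]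
    show Equiv.permCongr finSumFinEquiv (Equiv.sumCongr σ 1) _ = _
    simp [Equiv.permCongr_apply]

lemma cycleType_young_one {n m : ℕ} (σ : Perm (Fin n)) :
    (youngEmb n m (σ, 1)).cycleType = σ.cycleType := by
  rw [young_one_eq_extend]
  exact Equiv.Perm.cycleType_extendDomain _

/-- `(A × Z)↑^{S_{n+m}} = (B × Z)↑^{S_{n+m}}` iff `A = B`, for characters
`A, B` of `S_n` and a character `Z` of `S_m` (of a nonzero representation). -/
theorem stmt1 (n m : ℕ)
    (VA VB : FDRep ℂ (Perm (Fin n))) (VZ : FDRep ℂ (Perm (Fin m)))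
    (hZ : VZ.character 1 ≠ 0) :
    indVia (youngEmb n m) (fun x => VA.character x.1 * VZ.character x.2) =
      indVia (youngEmb n m) (fun x => VB.character x.1 * VZ.character x.2) ↔
    VA.character = VB.character := by
  constructor
  · intro h
    by_contra hne
    set D : Perm (Fin n) → ℂ := fun σ => VA.character σ - VB.character σ with hD
    have hDne : ∃ σ, D σ ≠ 0 := by
      by_contra hc; push_neg at hc
      exact hne (funext fun σ => sub_eq_zero.mp (hc σ))
    obtain ⟨σ1, hσ1⟩ := hDne
    obtain ⟨σ0, hσ0mem, hmax⟩ :=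
      Finset.exists_max_image (Finset.univ.filter fun σ => D σ ≠ 0) fixc
        ⟨σ1, Finset.mem_filter.mpr ⟨Finset.mem_univ _, hσ1⟩⟩
    have hσ0 : D σ0 ≠ 0 := (Finset.mem_filter.mp hσ0mem).2
    set g : Perm (Fin (n + m)) := youngEmb n m (σ0, 1) with hg
    -- The induced difference vanishes at g
    have hcard : ((Nat.card (Perm (Fin n) × Perm (Fin m)) : ℂ)) ≠ 0 := by
      exact_mod_cast (Nat.card_pos).ne'
    have hval := congrFun h g
    simp only [indVia] at hval
    have hAB := mul_left_cancel₀ (inv_ne_zero hcard) hval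
    have h0 : ∑ x : Perm (Fin (n + m)), ∑ p : Perm (Fin n) × Perm (Fin m),
        (if youngEmb n m p = x⁻¹ * g * x then D p.1 * VZ.character p.2 else 0) = 0 := by
      have : ∀ x : Perm (Fin (n + m)), ∀ p : Perm (Fin n) × Perm (Fin m),
          (if youngEmb n m p = x⁻¹ * g * x then D p.1 * VZ.character p.2 else 0) =
          (if youngEmb n m p = x⁻¹ * g * x then VA.character p.1 * VZ.character p.2 else 0) -
          (if youngEmb n m p = x⁻¹ * g * x then VB.character p.1 * VZ.character p.2 else 0) := by
        intro x p; split
        · simp only [hD]; ring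
        · simp
      simp only [this, Finset.sum_sub_distrib]
      rw [hAB, sub_self]
    -- Every term is either 0 or D σ0 * Z 1
    have hterm : ∀ (x : Perm (Fin (n + m))) (p : Perm (Fin n) × Perm (Fin m)),
        (if youngEmb n m p = x⁻¹ * g * x then D p.1 * VZ.character p.2 else 0) =
        (D σ0 * VZ.character 1) *
          (if youngEmb n m p = x⁻¹ * g * x ∧ D p.1 ≠ 0 then 1 else 0) := by
      intro x p
      by_cases hc : youngEmb n m p = x⁻¹ * g * x
      · by_cases hd : D p.1 = 0
        · simp [hc, hd]
        · have hcd : youngEmb n m p = x⁻¹ * g * x ∧ D p.1 ≠ 0 := ⟨hc, hd⟩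
          rw [if_pos hc, if_pos hcd, mul_one]
          -- fixed point count argument
          have hfix : fixc (youngEmb n m p) = fixc g := by
            rw [hc]
            have : x⁻¹ * g * x = x⁻¹ * g * (x⁻¹)⁻¹ := by group
            rw [this, fixc_conj]
          rw [fixc_young, fixc_young] at hfix
          have hfix1 : fixc ((1 : Perm (Fin m))) = m := by
            rw [fixc_one]; simp
          have hlem : fixc p.2 ≤ m := le_of_le_of_eq (fixc_le p.2) (by simp)
          have hle : fixc p.1 ≤ fixc σ0 :=
            hmax p.1 (Finset.mem_filter.mpr ⟨Finset.mem_univ _, hd⟩)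
          have hp2m : fixc p.2 = m := by
            simp only [hfix1] at hfix; omega
          have hp2 : p.2 = 1 := eq_one_of_fixc p.2 (by simpa using hp2m)
          -- conjugacy transfer
          have hconj : IsConj (youngEmb n m (p.1, (1 : Perm (Fin m)))) g := by
            rw [isConj_iff]
            refine ⟨x, ?_⟩
            rw [← hp2]
            show x * (youngEmb n m p) * x⁻¹ = g
            rw [hc]; group
          have hconj1 : IsConj p.1 σ0 := by
            rw [Equiv.Perm.isConj_iff_cycleType_eq] at hconj ⊢
            rw [cycleType_young_one, hg, cycleType_young_one] at hconj
            exact hconj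
          obtain ⟨c, hcc⟩ := isConj_iff.mp hconj1
          have hDval : D σ0 = D p.1 := by
            rw [← hcc]; simp [hD, FDRep.char_conj]
          rw [hp2, hDval]
      · simp [hc]
    rw [Finset.sum_congr rfl (fun x _ => Finset.sum_congr rfl (fun p _ => hterm x p))] at h0
    simp only [← Finset.mul_sum] at h0
    rcases mul_eq_zero.mp h0 with hv | hN
    · exact (mul_ne_zero hσ0 hZ) hv
    · -- the indicator sum is a positive natural number
      have hcast : ∀ (x : Perm (Fin (n + m))) (p : Perm (Fin n) × Perm (Fin m)),
          (if youngEmb n m p = x⁻¹ * g * x ∧ D p.1 ≠ 0 then (1 : ℂ) else 0) =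
          ((if youngEmb n m p = x⁻¹ * g * x ∧ D p.1 ≠ 0 then (1 : ℕ) else 0 : ℕ) : ℂ) := by
        intro x p; split <;> simp
      rw [Finset.sum_congr rfl (fun x _ => Finset.sum_congr rfl (fun p _ => hcast x p))] at hN
      simp only [← Nat.cast_sum] at hN
      have hN' : (∑ x : Perm (Fin (n + m)), ∑ p : Perm (Fin n) × Perm (Fin m),
          (if youngEmb n m p = x⁻¹ * g * x ∧ D p.1 ≠ 0 then (1 : ℕ) else 0)) = 0 := by
        exact_mod_cast hN
      have h1 : (if youngEmb n m ((σ0, 1) : Perm (Fin n) × Perm (Fin m)) =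
          (1 : Perm (Fin (n + m)))⁻¹ * g * 1 ∧ D ((σ0, 1) : Perm (Fin n) × Perm (Fin m)).1 ≠ 0
          then (1 : ℕ) else 0) = 1 :=
        if_pos ⟨by simp [hg], hσ0⟩
      have hin : 1 ≤ ∑ p : Perm (Fin n) × Perm (Fin m),
          (if youngEmb n m p = (1 : Perm (Fin (n + m)))⁻¹ * g * 1 ∧ D p.1 ≠ 0
            then (1 : ℕ) else 0) := by
        refine le_trans (le_of_eq h1.symm) ?_
        exact Finset.single_le_sum (f := fun p : Perm (Fin n) × Perm (Fin m) =>
          if youngEmb n m p = (1 : Perm (Fin (n + m)))⁻¹ * g * 1 ∧ D p.1 ≠ 0 then (1 : ℕ) else 0)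
          (fun i _ => Nat.zero_le _)
          (Finset.mem_univ ((σ0, 1) : Perm (Fin n) × Perm (Fin m)))
      have hout : (∑ p : Perm (Fin n) × Perm (Fin m),
          (if youngEmb n m p = (1 : Perm (Fin (n + m)))⁻¹ * g * 1 ∧ D p.1 ≠ 0
            then (1 : ℕ) else 0)) ≤
          ∑ x : Perm (Fin (n + m)), ∑ p : Perm (Fin n) × Perm (Fin m),
          (if youngEmb n m p = x⁻¹ * g * x ∧ D p.1 ≠ 0 then (1 : ℕ) else 0) :=
        Finset.single_le_sum (f := fun x : Perm (Fin (n + m)) =>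
          ∑ p : Perm (Fin n) × Perm (Fin m),
          (if youngEmb n m p = x⁻¹ * g * x ∧ D p.1 ≠ 0 then (1 : ℕ) else 0))
          (fun i _ => Nat.zero_le _) (Finset.mem_univ _)
      omega
  · intro h
    have : (fun x : Perm (Fin n) × Perm (Fin m) => VA.character x.1 * VZ.character x.2) =
        (fun x => VB.character x.1 * VZ.character x.2) := by
      funext x; rw [h]
    rw [this]
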